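/- Let S be the circle of circumference ℓ with uniform probability measure m, let 0 < a ≤ ℓ/2, let x ∈ S, and let ζ be a finite counting measure on S having atoms at x-a, x, and x+a. Then ∑_{y ∈ supp ζ} (a - d(x,y))₊ · ℓ · m(Γ_ζ(y)) = a², where Γ_ζ(y) = {z ∈ S : d(y,z) < d(y',z) for all other atoms y' of ζ} is the open Voronoi cell of y. -/

import Mathlib

open Finset MeasureTheory

/-- The (open) Voronoi cell of `y` with respect to the finite set of sites `F` on the circle. -/
def voronoi (ℓ : ℝ) (F : Finset (AddCircle ℓ)) (y : AddCircle ℓ) : Set (AddCircle ℓ) :=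
  {z | ∀ y' ∈ F, y' ≠ y → dist z y < dist z y'}

section aux



noncomputable def preF (V : Finset ℝ) (s : ℝ) : ℝ := WithBot.unbotD 0 ((V.filter (fun t => t < s)).max)
noncomputable def nxtF (V : Finset ℝ) (s : ℝ) : ℝ := WithTop.untopD 0 ((V.filter (fun t => s < t)).min)

lemma preF_spec {V : Finset ℝ} {s : ℝ} (h : ∃ t ∈ V, t < s) :
    preF V s ∈ V ∧ preF V s < s ∧ ∀ t ∈ V, t < s → t ≤ preF V s := by
  obtain ⟨t, ht, hts⟩ := h
  have hne : (V.filter (fun t => t < s)).Nonempty := ⟨t, mem_filter.2 ⟨ht, hts⟩⟩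
  have hmax : (V.filter (fun t => t < s)).max = ((V.filter (fun t => t < s)).max' hne : ℝ) :=
    (Finset.coe_max' hne).symm
  have hp : preF V s = (V.filter (fun t => t < s)).max' hne := by
    rw [preF, hmax, WithBot.unbotD_coe]
  have hmem := Finset.max'_mem _ hne
  rw [Finset.mem_filter] at hmem
  refine ⟨hp ▸ hmem.1, hp ▸ hmem.2, fun t' ht' hts' => ?_⟩
  have hmem' : t' ∈ V.filter (fun t => t < s) := mem_filter.2 ⟨ht', hts'⟩
  rw [hp]
  exact Finset.le_max' _ _ hmem'

lemma nxtF_spec {V : Finset ℝ} {s : ℝ} (h : ∃ t ∈ V, s < t) :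
    nxtF V s ∈ V ∧ s < nxtF V s ∧ ∀ t ∈ V, s < t → nxtF V s ≤ t := by
  obtain ⟨t, ht, hts⟩ := h
  have hne : (V.filter (fun t => s < t)).Nonempty := ⟨t, mem_filter.2 ⟨ht, hts⟩⟩
  have hmin : (V.filter (fun t => s < t)).min = ((V.filter (fun t => s < t)).min' hne : ℝ) :=
    (Finset.coe_min' hne).symm
  have hp : nxtF V s = (V.filter (fun t => s < t)).min' hne := by
    rw [nxtF, hmin, WithTop.untopD_coe]
  have hmem := Finset.min'_mem _ hne
  rw [Finset.mem_filter] at hmem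
  refine ⟨hp ▸ hmem.1, hp ▸ hmem.2, fun t' ht' hts' => ?_⟩
  have hmem' : t' ∈ V.filter (fun t => s < t) := mem_filter.2 ⟨ht', hts'⟩
  rw [hp]
  exact Finset.min'_le _ _ hmem'

lemma preF_eq {V : Finset ℝ} {s t : ℝ} (h1 : t ∈ V) (h2 : t < s)
    (h3 : ∀ t' ∈ V, t' < s → t' ≤ t) : preF V s = t := by
  obtain ⟨hm, hlt, hmax⟩ := preF_spec ⟨t, h1, h2⟩
  exact le_antisymm (h3 _ hm hlt) (hmax t h1 h2)

lemma nxtF_eq {V : Finset ℝ} {s t : ℝ} (h1 : t ∈ V) (h2 : s < t)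
    (h3 : ∀ t' ∈ V, s < t' → t ≤ t') : nxtF V s = t := by
  obtain ⟨hm, hlt, hmin⟩ := nxtF_spec ⟨t, h1, h2⟩
  exact le_antisymm (hmin t h1 h2) (h3 _ hm hlt)

lemma preF_insert_ge {V : Finset ℝ} {s₀ s : ℝ} (h : s ≤ s₀) :
    preF (insert s₀ V) s = preF V s := by
  simp [preF, Finset.filter_insert, not_lt.2 h]

lemma nxtF_insert_le {V : Finset ℝ} {s₀ s : ℝ} (h : s₀ ≤ s) :
    nxtF (insert s₀ V) s = nxtF V s := by
  simp [nxtF, Finset.filter_insert, not_lt.2 h]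

lemma preF_insert_lt {V : Finset ℝ} {s₀ s : ℝ} (h : s₀ < s) (hne : ∃ t ∈ V, t < s) :
    preF (insert s₀ V) s = max s₀ (preF V s) := by
  obtain ⟨t, ht, hts⟩ := hne
  have hne' : (V.filter (fun t => t < s)).Nonempty := ⟨t, mem_filter.2 ⟨ht, hts⟩⟩
  have hmax : (V.filter (fun t => t < s)).max = ((V.filter (fun t => t < s)).max' hne' : ℝ) :=
    (Finset.coe_max' hne').symm
  rw [preF, preF, Finset.filter_insert, if_pos h, Finset.max_insert, hmax, ← WithBot.coe_max,
    WithBot.unbotD_coe, WithBot.unbotD_coe]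

lemma nxtF_insert_gt {V : Finset ℝ} {s₀ s : ℝ} (h : s < s₀) (hne : ∃ t ∈ V, s < t) :
    nxtF (insert s₀ V) s = min s₀ (nxtF V s) := by
  obtain ⟨t, ht, hts⟩ := hne
  have hne' : (V.filter (fun t => s < t)).Nonempty := ⟨t, mem_filter.2 ⟨ht, hts⟩⟩
  have hmin : (V.filter (fun t => s < t)).min = ((V.filter (fun t => s < t)).min' hne' : ℝ) :=
    (Finset.coe_min' hne').symm
  rw [nxtF, nxtF, Finset.filter_insert, if_pos h, Finset.min_insert, hmin, ← WithTop.coe_min,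
    WithTop.untopD_coe, WithTop.untopD_coe]

lemma real_key (a b : ℝ) (ha : 0 < a) (W : Finset ℝ)
    (hW : ∀ w ∈ W, b - a < w ∧ w < b + a) :
    ∑ s ∈ insert b W, (a - |s - b|) *
      ((nxtF (insert (b-a) (insert (b+a) (insert b W))) s
        - preF (insert (b-a) (insert (b+a) (insert b W))) s) / 2) = a ^ 2 := by
  induction W using Finset.induction_on with
  | empty =>
    have hpre : preF (insert (b-a) (insert (b+a) (insert b (∅:Finset ℝ)))) b = b - a := by
      apply preF_eq
      · simp
      · linarith
      · intro t' ht' hlt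
        simp only [mem_insert, Finset.notMem_empty, or_false] at ht'
        rcases ht' with rfl | rfl | rfl
        · exact le_rfl
        · linarith
        · linarith
    have hnxt : nxtF (insert (b-a) (insert (b+a) (insert b (∅:Finset ℝ)))) b = b + a := by
      apply nxtF_eq
      · simp
      · linarith
      · intro t' ht' hlt
        simp only [mem_insert, Finset.notMem_empty, or_false] at ht'
        rcases ht' with rfl | rfl | rfl
        · linarith
        · exact le_rfl
        · linarith
    rw [Finset.sum_insert (Finset.notMem_empty b), Finset.sum_empty, hpre, hnxt]
    simp
    ring
  | @insert s₀ W hs₀W ih =>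
    have hs₀ab := hW s₀ (mem_insert_self _ _)
    have hWW : ∀ w ∈ W, b - a < w ∧ w < b + a := fun w hw => hW w (mem_insert_of_mem hw)
    by_cases hbs : s₀ = b
    · subst hbs; rw [Finset.insert_idem]; exact ih hWW
    have hins : insert (b-a) (insert (b+a) (insert b (insert s₀ W)))
        = insert s₀ (insert (b-a) (insert (b+a) (insert b W))) := by
      rw [Finset.insert_comm b s₀ W, Finset.insert_comm (b+a) s₀, Finset.insert_comm (b-a) s₀]
    set V : Finset ℝ := insert (b-a) (insert (b+a) (insert b W)) with hVdef
    have hbaV : b - a ∈ V := mem_insert_self _ _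
    have hbaV' : b + a ∈ V := mem_insert_of_mem (mem_insert_self _ _)
    have hbV : b ∈ V := mem_insert_of_mem (mem_insert_of_mem (mem_insert_self _ _))
    have hWV : ∀ w ∈ W, w ∈ V := fun w hw =>
      mem_insert_of_mem (mem_insert_of_mem (mem_insert_of_mem hw))
    have hs₀V : s₀ ∉ V := by
      simp only [hVdef, mem_insert, not_or]
      exact ⟨by linarith [hs₀ab.1], by linarith [hs₀ab.2], hbs, hs₀W⟩
    have hpex : ∃ t ∈ V, t < s₀ := ⟨b - a, hbaV, by linarith [hs₀ab.1]⟩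
    have hnex : ∃ t ∈ V, s₀ < t := ⟨b + a, hbaV', by linarith [hs₀ab.2]⟩
    obtain ⟨hpV, hps, hpmax⟩ := preF_spec hpex
    obtain ⟨hnV, hns, hnmin⟩ := nxtF_spec hnex
    have hbpn : b ≤ preF V s₀ ∨ nxtF V s₀ ≤ b := by
      rcases lt_or_gt_of_ne (Ne.symm hbs) with h | h
      · exact Or.inl (hpmax b hbV h)
      · exact Or.inr (hnmin b hbV h)
    have hnxtp : nxtF V (preF V s₀) = nxtF V s₀ := by
      apply nxtF_eq hnV (lt_trans hps hns)
      intro t' ht' hlt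
      by_cases h : s₀ < t'
      · exact hnmin t' ht' h
      · exfalso
        have h2 : t' < s₀ := lt_of_le_of_ne (not_lt.1 h) (by rintro rfl; exact hs₀V ht')
        exact absurd (hpmax t' ht' h2) (not_le.2 hlt)
    have hpren : preF V (nxtF V s₀) = preF V s₀ := by
      apply preF_eq hpV (lt_trans hps hns)
      intro t' ht' hlt
      by_cases h : t' < s₀
      · exact hpmax t' ht' h
      · exfalso
        have h2 : s₀ < t' := lt_of_le_of_ne (not_lt.1 h) (by rintro rfl; exact hs₀V ht')
        exact absurd (hnmin t' ht' h2) (not_le.2 hlt)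
    rw [hins, Finset.insert_comm b s₀ W, Finset.sum_insert (show s₀ ∉ insert b W by
      simp only [mem_insert, not_or]; exact ⟨hbs, hs₀W⟩)]
    rw [preF_insert_ge le_rfl, nxtF_insert_le le_rfl]
    have hterm : ∀ s ∈ insert b W,
        (a - |s - b|) * ((nxtF (insert s₀ V) s - preF (insert s₀ V) s) / 2)
        = (a - |s - b|) * ((nxtF V s - preF V s) / 2)
          + ((if s = preF V s₀ then (a - |preF V s₀ - b|) * ((s₀ - nxtF V s₀)/2) else 0)
             + (if s = nxtF V s₀ then (a - |nxtF V s₀ - b|) * ((preF V s₀ - s₀)/2) else 0)) := by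
      intro s hs
      have hsV : s ∈ V := by
        rcases mem_insert.1 hs with rfl | h
        · exact hbV
        · exact hWV s h
      have hss₀ : s ≠ s₀ := by rintro rfl; exact hs₀V hsV
      have hsgt : b - a < s := by
        rcases mem_insert.1 hs with rfl | h
        · linarith
        · linarith [(hWW s h).1]
      have hslt : s < b + a := by
        rcases mem_insert.1 hs with rfl | h
        · linarith
        · linarith [(hWW s h).2]
      rcases lt_or_gt_of_ne hss₀ with hlt | hgt
      · -- s < s₀ : preF unchanged, nxtF becomes min s₀ (nxtF V s)
        rw [preF_insert_ge hlt.le, nxtF_insert_gt hlt ⟨b + a, hbaV', hslt⟩]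
        have hsp : s ≤ preF V s₀ := hpmax s hsV hlt
        have hsnen : s ≠ nxtF V s₀ := by rintro rfl; exact absurd hns (not_lt.2 hlt.le)
        by_cases hsep : s = preF V s₀
        · rw [if_pos hsep, if_neg hsnen]
          subst hsep
          rw [hnxtp, min_eq_left hns.le]
          ring
        · have hsp' : s < preF V s₀ := lt_of_le_of_ne hsp hsep
          have hnle : nxtF V s ≤ preF V s₀ := (nxtF_spec ⟨_, hpV, hsp'⟩).2.2 _ hpV hsp'
          rw [min_eq_right (le_trans hnle hps.le), if_neg hsep, if_neg hsnen]
          ring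
      · -- s₀ < s
        rw [nxtF_insert_le hgt.le, preF_insert_lt hgt ⟨b - a, hbaV, hsgt⟩]
        have hsn : nxtF V s₀ ≤ s := hnmin s hsV hgt
        have hsnep : s ≠ preF V s₀ := by rintro rfl; exact absurd hps (not_lt.2 hgt.le)
        by_cases hsen : s = nxtF V s₀
        · rw [if_neg hsnep, if_pos hsen]
          subst hsen
          rw [hpren, max_eq_left hps.le]
          ring
        · have hsn' : nxtF V s₀ < s := lt_of_le_of_ne hsn (Ne.symm hsen)
          have hple : nxtF V s₀ ≤ preF V s := (preF_spec ⟨_, hnV, hsn'⟩).2.2 _ hnV hsn'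
          rw [max_eq_right (le_trans hns.le hple), if_neg hsnep, if_neg hsen]
          ring
    rw [Finset.sum_congr rfl hterm, Finset.sum_add_distrib, Finset.sum_add_distrib,
      Finset.sum_ite_eq' (insert b W) (preF V s₀), Finset.sum_ite_eq' (insert b W) (nxtF V s₀),
      ih hWW]
    have hA : (if preF V s₀ ∈ insert b W
          then (a - |preF V s₀ - b|) * ((s₀ - nxtF V s₀)/2) else 0)
        = (a - |preF V s₀ - b|) * ((s₀ - nxtF V s₀)/2) := by
      split_ifs with h
      · rfl
      · have hpe : preF V s₀ = b - a := by
          rcases mem_insert.1 hpV with h1 | h1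
          · exact h1
          rcases mem_insert.1 h1 with h2 | h2
          · exfalso; linarith [hps, hs₀ab.2]
          · exact absurd h2 h
        rw [hpe, show |b - a - b| = a by rw [abs_of_nonpos (by linarith)]; ring]
        ring
    have hB : (if nxtF V s₀ ∈ insert b W
          then (a - |nxtF V s₀ - b|) * ((preF V s₀ - s₀)/2) else 0)
        = (a - |nxtF V s₀ - b|) * ((preF V s₀ - s₀)/2) := by
      split_ifs with h
      · rfl
      · have hne : nxtF V s₀ = b + a := by
          rcases mem_insert.1 hnV with h1 | h1
          · exfalso; linarith [hns, hs₀ab.1]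
          rcases mem_insert.1 h1 with h2 | h2
          · exact h2
          · exact absurd h2 h
        rw [hne, show |b + a - b| = a by rw [abs_of_nonneg (by linarith)]; ring]
        ring
    rw [hA, hB]
    rcases hbpn with hcase | hcase
    · rw [abs_of_nonneg (show (0:ℝ) ≤ s₀ - b by linarith [hps]),
        abs_of_nonneg (show (0:ℝ) ≤ preF V s₀ - b by linarith),
        abs_of_nonneg (show (0:ℝ) ≤ nxtF V s₀ - b by linarith [hps, hns])]
      ring
    · rw [abs_of_nonpos (show s₀ - b ≤ 0 by linarith [hns]),
        abs_of_nonpos (show preF V s₀ - b ≤ 0 by linarith [hps, hns]),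
        abs_of_nonpos (show nxtF V s₀ - b ≤ 0 by linarith)]
      ring


section helpers
variable (ℓ : ℝ) [hℓF : Fact (0 < ℓ)]

lemma coe_equivIoc' (c : ℝ) (y : AddCircle ℓ) :
    (((AddCircle.equivIoc ℓ c y : ℝ)) : AddCircle ℓ) = y :=
  (AddCircle.equivIoc ℓ c).symm_apply_apply y

lemma equivIoc_coe_of_mem' {c u : ℝ} (h : u ∈ Set.Ioc c (c + ℓ)) :
    ((AddCircle.equivIoc ℓ c (u : AddCircle ℓ)) : ℝ) = u := by
  rw [AddCircle.equivIoc, QuotientAddGroup.equivIocMod_coe]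
  exact (toIocMod_eq_self _).2 h

lemma norm_coe_le' (w : ℝ) : ‖(w : AddCircle ℓ)‖ ≤ |w| := by
  simpa using QuotientAddGroup.norm_mk_le_norm (S := AddSubgroup.zmultiples ℓ) (m := w)

lemma norm_coe_half' {w : ℝ} (h : |w| ≤ ℓ / 2) : ‖(w : AddCircle ℓ)‖ = |w| := by
  have hℓ : 0 < ℓ := hℓF.out
  rcases lt_or_eq_of_le h with h' | h'
  · have hr : round (ℓ⁻¹ * w) = 0 := by
      rw [round_eq_zero_iff]
      have habs : |ℓ⁻¹ * w| < 1 / 2 := by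
        rw [abs_mul, abs_inv, abs_of_pos hℓ]
        rw [inv_mul_lt_iff₀ hℓ]
        linarith
      obtain ⟨h1, h2⟩ := abs_lt.1 habs
      exact ⟨by linarith, h2⟩
    rw [AddCircle.norm_eq, hr]
    simp
  · -- |w| = ℓ / 2
    rcases abs_eq (by linarith : (0:ℝ) ≤ ℓ / 2) |>.1 h' with rfl | rfl
    · rw [AddCircle.norm_half_period_eq, abs_of_pos hℓ, abs_of_pos (by linarith : (0:ℝ) < ℓ/2)]
    · have : ((-(ℓ/2) : ℝ) : AddCircle ℓ) = -(((ℓ/2 : ℝ)) : AddCircle ℓ) := AddCircle.coe_neg ℓ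
      rw [this, norm_neg, AddCircle.norm_half_period_eq, abs_of_pos hℓ,
        abs_of_neg (by linarith : -(ℓ/2) < (0:ℝ))]
      ring

lemma norm_coe_min' {w : ℝ} (h0 : 0 ≤ w) (h1 : w ≤ ℓ) :
    ‖(w : AddCircle ℓ)‖ = min w (ℓ - w) := by
  have hℓ : 0 < ℓ := hℓF.out
  rcases le_or_gt w (ℓ / 2) with h | h
  · rw [norm_coe_half' ℓ (by rw [abs_of_nonneg h0]; exact h), abs_of_nonneg h0,
      min_eq_left (by linarith)]
  · have hcoe : ((w : ℝ) : AddCircle ℓ) = ((w - ℓ : ℝ) : AddCircle ℓ) := by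
      conv_lhs => rw [show w = (w - ℓ) + ℓ by ring]
      rw [AddCircle.coe_add_period]
    rw [hcoe, norm_coe_half' ℓ (by rw [abs_of_nonpos (by linarith)]; linarith),
      abs_of_nonpos (by linarith : w - ℓ ≤ 0), min_eq_right (by linarith)]
    ring

lemma dist_coe' (u v : ℝ) :
    dist ((u : AddCircle ℓ)) ((v : AddCircle ℓ)) = ‖((u - v : ℝ) : AddCircle ℓ)‖ := by
  rw [dist_eq_norm, ← AddCircle.coe_sub]

end helpers


lemma volume_coe_Ioo (ℓ : ℝ) [hℓF : Fact (0 < ℓ)] {c L R : ℝ} (hL : c ≤ L) (hR : R ≤ c + ℓ) :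
    volume ((fun r : ℝ => (r : AddCircle ℓ)) '' Set.Ioo L R) = ENNReal.ofReal (R - L) := by
  have hℓ : 0 < ℓ := hℓF.out
  rcases le_or_gt R L with h | h
  · rw [Set.Ioo_eq_empty (by exact fun hc => absurd h (not_le.2 hc)), Set.image_empty,
      measure_empty, Eq.comm, ENNReal.ofReal_eq_zero]
    linarith
  · have hmeas : MeasurableSet ((fun r : ℝ => (r : AddCircle ℓ)) '' Set.Ioo L R) :=
      ((QuotientAddGroup.isOpenMap_coe _) isOpen_Ioo).measurableSet
    rw [AddCircle.add_projection_respects_measure ℓ c hmeas]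
    have hset : (QuotientAddGroup.mk ⁻¹' ((fun r : ℝ => (r : AddCircle ℓ)) '' Set.Ioo L R))
        ∩ Set.Ioc c (c + ℓ) = Set.Ioo L R := by
      ext w
      constructor
      · rintro ⟨hw1, hw2⟩
        obtain ⟨w', hw', hww⟩ := hw1
        have hsub : (w' : AddCircle ℓ) = (w : AddCircle ℓ) := hww
        rw [QuotientAddGroup.eq_iff_sub_mem, AddSubgroup.mem_zmultiples_iff] at hsub
        obtain ⟨k, hk⟩ := hsub
        have hk' : (k : ℝ) * ℓ = w' - w := by rw [← hk]; simp [zsmul_eq_mul]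
        have hw'2 : w' ∈ Set.Ioc c (c + ℓ) := ⟨lt_of_le_of_lt hL hw'.1, le_trans hw'.2.le hR⟩
        have habs : |(k : ℝ) * ℓ| < ℓ := by
          rw [hk', abs_lt]
          constructor
          · linarith [hw2.2, hw'2.1]
          · linarith [hw2.1, hw'2.2]
        rw [abs_mul, abs_of_pos hℓ] at habs
        have hkabs : |(k : ℝ)| < 1 := by
          by_contra hc
          push_neg at hc
          nlinarith
        have hk0 : k = 0 := by
          refine Int.abs_lt_one_iff.1 ?_
          exact_mod_cast (by push_cast; exact hkabs : ((|k| : ℤ) : ℝ) < (1:ℝ))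
        have hww' : w' = w := by
          rw [hk0] at hk'
          have h0 : (0:ℝ) = w' - w := by simpa using hk'
          linarith
        rwa [← hww']
      · intro hw
        exact ⟨⟨w, hw, rfl⟩, ⟨lt_of_le_of_lt hL hw.1, le_trans hw.2.le hR⟩⟩
    rw [hset, Real.volume_Ioo]

end aux

set_option maxHeartbeats 2000000 in
/-- Exact interpolation identity: if the configuration `ζ` has atoms at `x-a`, `x`, `x+a`,
then `∑_y (a - d(x,y))₊ · length(Γ_ζ(y)) = a²` (length = arc length = `ℓ · m`). -/
theorem voronoi_tent_identity (ℓ : ℝ) [Fact (0 < ℓ)] (a : ℝ) (ha : 0 < a) (haℓ : a ≤ ℓ / 2)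
    (x : AddCircle ℓ) (ζ : AddCircle ℓ →₀ ℕ)
    (hx : x ∈ ζ.support) (hxl : x - (a : ℝ) ∈ ζ.support) (hxr : x + (a : ℝ) ∈ ζ.support) :
    ∑ y ∈ ζ.support, max (a - dist x y) 0 * (volume (voronoi ℓ ζ.support y)).toReal
      = a ^ 2 := by
  have hℓ : 0 < ℓ := Fact.out
  obtain ⟨x₀, rfl⟩ : ∃ r : ℝ, x = (r : AddCircle ℓ) := ⟨_, (coe_equivIoc' ℓ 0 x).symm⟩
  set F := ζ.support with hF
  set c : ℝ := x₀ - a with hc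
  set e : AddCircle ℓ → ℝ := fun y => (AddCircle.equivIoc ℓ c y : ℝ) with he
  have he_mem : ∀ y : AddCircle ℓ, e y ∈ Set.Ioc c (c + ℓ) := fun y => (AddCircle.equivIoc ℓ c y).2
  have he_coe : ∀ y : AddCircle ℓ, ((e y : ℝ) : AddCircle ℓ) = y := fun y => coe_equivIoc' ℓ c y
  have he_inj : ∀ y y' : AddCircle ℓ, e y = e y' → y = y' := fun y y' h => by
    rw [← he_coe y, ← he_coe y', h]
  have hex : e ((x₀ : ℝ) : AddCircle ℓ) = x₀ :=
    equivIoc_coe_of_mem' ℓ ⟨by simp only [hc]; linarith, by simp only [hc]; linarith⟩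
  have hexr : e (((x₀ : ℝ) : AddCircle ℓ) + (a : ℝ)) = x₀ + a := by
    rw [← AddCircle.coe_add]
    exact equivIoc_coe_of_mem' ℓ ⟨by simp only [hc]; linarith, by simp only [hc]; linarith⟩
  have hexl : e (((x₀ : ℝ) : AddCircle ℓ) - (a : ℝ)) = c + ℓ := by
    rw [← AddCircle.coe_sub]
    have h2 : ((x₀ - a : ℝ) : AddCircle ℓ) = ((c + ℓ : ℝ) : AddCircle ℓ) := by
      rw [hc]
      exact (AddCircle.coe_add_period ℓ (x₀ - a)).symm
    rw [h2]
    exact equivIoc_coe_of_mem' ℓ ⟨by linarith, le_rfl⟩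
  have hdist2 : ∀ (w : ℝ) (y : AddCircle ℓ),
      dist ((w : ℝ) : AddCircle ℓ) y = ‖((w - e y : ℝ) : AddCircle ℓ)‖ := by
    intro w y
    conv_lhs => rw [← he_coe y]
    exact dist_coe' ℓ w (e y)
  have habs_min : ∀ v : ℝ, |v| ≤ ℓ → ‖((v : ℝ) : AddCircle ℓ)‖ = min |v| (ℓ - |v|) := by
    intro v hv
    rcases abs_cases v with ⟨h1, h2⟩ | ⟨h1, h2⟩
    · rw [h1]; exact norm_coe_min' ℓ h2 (by rw [← h1]; exact hv)
    · rw [h1]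
      have hn : ‖((v : ℝ) : AddCircle ℓ)‖ = ‖((-v : ℝ) : AddCircle ℓ)‖ := by
        rw [AddCircle.coe_neg ℓ, norm_neg]
      rw [hn]
      exact norm_coe_min' ℓ (by linarith) (by rw [← h1]; exact hv)
  -- interior characterization
  have hint : ∀ y : AddCircle ℓ, dist ((x₀ : ℝ) : AddCircle ℓ) y < a → e y < x₀ + a := by
    intro y hy
    by_contra hcon
    push_neg at hcon
    have hv2 : e y ≤ c + ℓ := (he_mem y).2
    have hd : dist ((x₀ : ℝ) : AddCircle ℓ) y = min |x₀ - e y| (ℓ - |x₀ - e y|) := by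
      rw [hdist2 x₀ y]
      exact habs_min _ (by rw [abs_of_nonpos (by linarith)]; simp only [hc] at hv2; linarith)
    have habs : |x₀ - e y| = e y - x₀ := by rw [abs_of_nonpos (by linarith)]; ring
    rw [hd, habs] at hy
    rcases min_cases (e y - x₀) (ℓ - (e y - x₀)) with ⟨hm, _⟩ | ⟨hm, _⟩ <;> rw [hm] at hy <;>
      [linarith; (simp only [hc] at hv2; linarith)]
  have hint2 : ∀ y : AddCircle ℓ, e y < x₀ + a →
      dist ((x₀ : ℝ) : AddCircle ℓ) y = |e y - x₀| ∧ dist ((x₀ : ℝ) : AddCircle ℓ) y < a := by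
    intro y hy
    have h1 : -a < e y - x₀ := by have := (he_mem y).1; simp only [hc] at this; linarith
    have habs : |e y - x₀| < a := abs_lt.2 ⟨h1, by linarith⟩
    have hd : dist ((x₀ : ℝ) : AddCircle ℓ) y = |e y - x₀| := by
      rw [hdist2 x₀ y, show ((x₀ - e y : ℝ) : AddCircle ℓ) = ((-(e y - x₀) : ℝ) : AddCircle ℓ)
        by norm_num, AddCircle.coe_neg ℓ, norm_neg, norm_coe_half' ℓ (by linarith)]
    exact ⟨hd, by rw [hd]; exact habs⟩
  set G := F.filter (fun y => dist ((x₀ : ℝ) : AddCircle ℓ) y < a) with hG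
  have hxG : ((x₀ : ℝ) : AddCircle ℓ) ∈ G := mem_filter.2 ⟨hx, by rw [dist_self]; exact ha⟩
  set T'' : Finset ℝ := insert c (F.image e) with hT
  have hcT : c ∈ T'' := mem_insert_self _ _
  have hxaT : x₀ + a ∈ T'' := mem_insert_of_mem (mem_image.2 ⟨_, hxr, hexr⟩)
  have hxaneq : x₀ + a = c + 2 * a := by rw [hc]; ring
  have hc2l : c + 2 * a ≤ c + ℓ := by linarith
  -- the Voronoi cells of interior sites
  have hcell : ∀ y ∈ G, volume (voronoi ℓ F y)
      = ENNReal.ofReal ((nxtF T'' (e y) - preF T'' (e y)) / 2) := by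
    intro y hy
    obtain ⟨hyF, hyd⟩ := mem_filter.1 hy
    have hu_lt : e y < x₀ + a := hint y hyd
    have hu_gt : c < e y := (he_mem y).1
    obtain ⟨hpT, hpu, hpmax⟩ := preF_spec ⟨c, hcT, hu_gt⟩
    obtain ⟨hnT, hun, hnmin⟩ := nxtF_spec ⟨x₀ + a, hxaT, hu_lt⟩
    have hnle : nxtF T'' (e y) ≤ x₀ + a := hnmin _ hxaT hu_lt
    have hpge : c ≤ preF T'' (e y) := hpmax c hcT hu_gt
    have hLR : voronoi ℓ F y = (fun r : ℝ => (r : AddCircle ℓ)) ''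
        Set.Ioo ((e y + preF T'' (e y)) / 2) ((e y + nxtF T'' (e y)) / 2) := by
      have hdxa : dist ((x₀ : ℝ) : AddCircle ℓ) (((x₀ : ℝ) : AddCircle ℓ) + (a : ℝ)) = a := by
        rw [hdist2 x₀ _, hexr, show (x₀ - (x₀ + a) : ℝ) = -a by ring, AddCircle.coe_neg ℓ,
          norm_neg, norm_coe_half' ℓ (by rw [abs_of_pos ha]; linarith), abs_of_pos ha]
      have hdxl : dist ((x₀ : ℝ) : AddCircle ℓ) (((x₀ : ℝ) : AddCircle ℓ) - (a : ℝ)) = a := by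
        rw [hdist2 x₀ _, hexl]
        have hper : ((x₀ - (c + ℓ) : ℝ) : AddCircle ℓ) = ((a : ℝ) : AddCircle ℓ) := by
          conv_rhs => rw [show (a : ℝ) = (x₀ - (c + ℓ)) + ℓ by rw [hc]; ring]
          rw [AddCircle.coe_add_period]
        rw [hper, norm_coe_half' ℓ (by rw [abs_of_pos ha]; linarith), abs_of_pos ha]
      have hyner : (((x₀ : ℝ) : AddCircle ℓ) + (a : ℝ)) ≠ y := by
        intro hcon
        rw [← hcon, hdxa] at hyd
        exact lt_irrefl _ hyd
      have hynel : (((x₀ : ℝ) : AddCircle ℓ) - (a : ℝ)) ≠ y := by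
        intro hcon
        rw [← hcon, hdxl] at hyd
        exact lt_irrefl _ hyd
      ext z
      simp only [voronoi, Set.mem_setOf_eq, Set.mem_image]
      constructor
      · -- voronoi cell ⊆ arc
        intro hz
        obtain ⟨w, hwIoc, rfl⟩ : ∃ w, w ∈ Set.Ioc c (c + ℓ) ∧ ((w : ℝ) : AddCircle ℓ) = z :=
          ⟨e z, he_mem z, he_coe z⟩
        have hD1 := hz _ hxr hyner
        have hD2 := hz _ hxl hynel
        rw [hdist2 w y] at hD1 hD2
        rw [show dist ((w : ℝ) : AddCircle ℓ) (((x₀ : ℝ) : AddCircle ℓ) + (a : ℝ))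
            = ‖((w - (x₀ + a) : ℝ) : AddCircle ℓ)‖ by rw [hdist2 w _, hexr]] at hD1
        rw [show dist ((w : ℝ) : AddCircle ℓ) (((x₀ : ℝ) : AddCircle ℓ) - (a : ℝ))
            = ‖((w - (c + ℓ) : ℝ) : AddCircle ℓ)‖ by rw [hdist2 w _, hexl]] at hD2
        have hb1 : ‖((w - (x₀ + a) : ℝ) : AddCircle ℓ)‖ ≤ |w - (x₀ + a)| := norm_coe_le' ℓ _
        have hper : ((w - (c + ℓ) : ℝ) : AddCircle ℓ) = ((w - c : ℝ) : AddCircle ℓ) := by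
          conv_rhs => rw [show w - c = (w - (c + ℓ)) + ℓ by ring]
          rw [AddCircle.coe_add_period]
        have hb2 : ‖((w - (c + ℓ) : ℝ) : AddCircle ℓ)‖ ≤ |w - (c + ℓ)| := norm_coe_le' ℓ _
        have hb2' : ‖((w - (c + ℓ) : ℝ) : AddCircle ℓ)‖ ≤ |w - c| := by
          rw [hper]; exact norm_coe_le' ℓ _
        -- Step A : w < x₀ + a
        have hwlt : w < x₀ + a := by
          by_contra hcon
          push_neg at hcon
          have hm0 : 0 ≤ w - e y := by linarith
          have hm1 : w - e y ≤ ℓ := by linarith [hwIoc.2]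
          rw [norm_coe_min' ℓ hm0 hm1] at hD1 hD2
          rcases min_cases (w - e y) (ℓ - (w - e y)) with ⟨hm, _⟩ | ⟨hm, _⟩ <;>
            rw [hm] at hD1 hD2
          · have habs1 : |w - (x₀ + a)| = w - (x₀ + a) := abs_of_nonneg (by linarith)
            rw [habs1] at hb1
            linarith
          · have habs2 : |w - (c + ℓ)| = (c + ℓ) - w := by
              rw [abs_of_nonpos (by linarith [hwIoc.2])]; ring
            rw [habs2] at hb2
            linarith
        have hwgt : c < w := hwIoc.1
        -- Step B : the distance to y is the euclidean one
        have hDy : ‖((w - e y : ℝ) : AddCircle ℓ)‖ = |w - e y| := by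
          rcases le_or_gt |w - e y| (ℓ / 2) with hle | hgt
          · exact norm_coe_half' ℓ hle
          · exfalso
            have habs2a : |w - e y| ≤ ℓ := by
              rw [abs_le]; constructor <;> [linarith [hu_lt]; linarith [hu_gt]]
            rw [habs_min (w - e y) habs2a, min_eq_right (by linarith)] at hD1 hD2
            have habs1 : |w - (x₀ + a)| = (x₀ + a) - w := by
              rw [abs_of_nonpos (by linarith)]; ring
            rw [habs1] at hb1
            have habs2 : |w - c| = w - c := abs_of_nonneg (by linarith)
            rw [habs2] at hb2'
            rcases abs_cases (w - e y) with ⟨h1, _⟩ | ⟨h1, _⟩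
            · linarith
            · linarith
        -- Step C : w is in the open interval
        have hkeyp : |w - e y| < |w - preF T'' (e y)| := by
          rcases mem_insert.1 hpT with hpc | hpim
          · rw [hpc]
            exact lt_of_lt_of_le (hDy ▸ hD2) hb2'
          · obtain ⟨y3, hy3F, hy3e⟩ := mem_image.1 hpim
            have hy3ne : y3 ≠ y := by
              intro hcon
              rw [hcon] at hy3e
              exact (ne_of_lt hpu) hy3e.symm
            have hD3 := hz y3 hy3F hy3ne
            rw [hdist2 w y, hdist2 w y3, hy3e] at hD3
            exact lt_of_lt_of_le (hDy ▸ hD3) (norm_coe_le' ℓ _)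
        have hkeyn : |w - e y| < |w - nxtF T'' (e y)| := by
          rcases mem_insert.1 hnT with hnc | hnim
          · exfalso; rw [hnc] at hun; linarith
          · obtain ⟨y3, hy3F, hy3e⟩ := mem_image.1 hnim
            have hy3ne : y3 ≠ y := by
              intro hcon
              rw [hcon] at hy3e
              exact (ne_of_gt hun) hy3e.symm
            have hD3 := hz y3 hy3F hy3ne
            rw [hdist2 w y, hdist2 w y3, hy3e] at hD3
            exact lt_of_lt_of_le (hDy ▸ hD3) (norm_coe_le' ℓ _)
        have hsqp : (w - e y) ^ 2 < (w - preF T'' (e y)) ^ 2 := sq_lt_sq.2 hkeyp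
        have hsqn : (w - e y) ^ 2 < (w - nxtF T'' (e y)) ^ 2 := sq_lt_sq.2 hkeyn
        refine ⟨w, ⟨?_, ?_⟩, rfl⟩
        · nlinarith [hsqp, hpu]
        · nlinarith [hsqn, hun]
      · -- arc ⊆ voronoi cell
        rintro ⟨w, hw, rfl⟩
        obtain ⟨hwL, hwR⟩ := Set.mem_Ioo.1 hw
        intro y' hy'F hy'ne
        have hwgt : c < w := by rw [hc]; rw [hc] at hpge; linarith [hu_gt]
        have hwlt : w < x₀ + a := by linarith [hnle, hu_lt]
        have hkey : ∀ t ∈ T'', t ≠ e y → |w - e y| < |w - t| := by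
          intro t ht htu
          rcases lt_or_gt_of_ne htu with h | h
          · have htp : t ≤ preF T'' (e y) := hpmax t ht h
            have hsq : (w - e y) ^ 2 < (w - t) ^ 2 := by
              nlinarith [mul_pos (sub_pos.2 h) (show (0:ℝ) < 2 * w - e y - t by linarith)]
            exact sq_lt_sq.1 hsq
          · have htn : nxtF T'' (e y) ≤ t := hnmin t ht h
            have hsq : (w - e y) ^ 2 < (w - t) ^ 2 := by
              nlinarith [mul_pos (sub_pos.2 h) (show (0:ℝ) < e y + t - 2 * w by linarith)]
            exact sq_lt_sq.1 hsq
        have hdisty : dist ((w : ℝ) : AddCircle ℓ) y ≤ |w - e y| := by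
          rw [hdist2 w y]; exact norm_coe_le' ℓ _
        have ht' : e y' ∈ T'' := mem_insert_of_mem (mem_image.2 ⟨y', hy'F, rfl⟩)
        have htu' : e y' ≠ e y := fun hcon => hy'ne (he_inj _ _ hcon)
        have hklt : |w - e y| < |w - e y'| := hkey _ ht' htu'
        rw [hdist2 w y']
        have hy'gt : c < e y' := (he_mem y').1
        have hy'le : e y' ≤ c + ℓ := (he_mem y').2
        have hvgt : -ℓ < w - e y' := by linarith
        have hvlt : w - e y' < 2 * a := by rw [hc] at hy'gt; linarith
        rcases le_or_gt 0 (w - e y') with hv0 | hv0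
        · rw [norm_coe_min' ℓ hv0 (by linarith)]
          rw [abs_of_nonneg hv0] at hklt
          apply lt_min
          · linarith
          · have hxane : x₀ + a ≠ e y := ne_of_gt hu_lt
            have h2 : |w - e y| < |w - (x₀ + a)| := hkey _ hxaT hxane
            rw [show |w - (x₀ + a)| = x₀ + a - w by rw [abs_of_nonpos (by linarith : w - (x₀+a) ≤ 0)]; ring] at h2
            rw [hc] at hy'gt
            linarith
        · have hnn : ‖((w - e y' : ℝ) : AddCircle ℓ)‖ = ‖((-(w - e y') : ℝ) : AddCircle ℓ)‖ := by
            rw [AddCircle.coe_neg ℓ, norm_neg]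
          rw [hnn, norm_coe_min' ℓ (by linarith) (by linarith)]
          rw [abs_of_neg hv0] at hklt
          apply lt_min
          · linarith
          · have hcne : c ≠ e y := ne_of_lt hu_gt
            have h2 : |w - e y| < |w - c| := hkey _ hcT hcne
            rw [show |w - c| = w - c from abs_of_nonneg (by linarith : (0:ℝ) ≤ w - c)] at h2
            linarith

    rw [hLR, volume_coe_Ioo ℓ (by linarith) (by linarith)]
    congr 1
    ring
  -- assemble the sum
  have hsummand : ∀ y ∈ G, max (a - dist ((x₀ : ℝ) : AddCircle ℓ) y) 0
        * (volume (voronoi ℓ F y)).toReal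
      = (a - |e y - x₀|) * ((nxtF T'' (e y) - preF T'' (e y)) / 2) := by
    intro y hy
    obtain ⟨hyF, hyd⟩ := mem_filter.1 hy
    obtain ⟨hde, _⟩ := hint2 y (hint y hyd)
    obtain ⟨_, hpu, _⟩ := preF_spec ⟨c, hcT, (he_mem y).1⟩
    obtain ⟨_, hun, _⟩ := nxtF_spec ⟨x₀ + a, hxaT, hint y hyd⟩
    rw [hcell y hy, max_eq_left (by linarith), hde, ENNReal.toReal_ofReal (by linarith)]
  rw [← Finset.sum_filter_add_sum_filter_not F (fun y => dist ((x₀ : ℝ) : AddCircle ℓ) y < a)]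
  have hsum0 : ∑ y ∈ F.filter (fun y => ¬ dist ((x₀ : ℝ) : AddCircle ℓ) y < a),
      max (a - dist ((x₀ : ℝ) : AddCircle ℓ) y) 0 * (volume (voronoi ℓ F y)).toReal = 0 := by
    apply Finset.sum_eq_zero
    intro y hy
    obtain ⟨_, hnd⟩ := mem_filter.1 hy
    push_neg at hnd
    rw [max_eq_right (by linarith)]
    ring
  rw [hsum0, add_zero, ← hG, Finset.sum_congr rfl hsummand]
  have hinjG : ∀ y ∈ G, ∀ y' ∈ G, e y = e y' → y = y' := fun y _ y' _ h => he_inj y y' h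
  rw [← Finset.sum_image (g := e)
    (f := fun u => (a - |u - x₀|) * ((nxtF T'' u - preF T'' u) / 2)) hinjG]
  set WW := (G.image e).erase x₀ with hWWd
  have himg : insert x₀ WW = G.image e := Finset.insert_erase (mem_image.2 ⟨_, hxG, hex⟩)
  rw [← himg]
  have hWWmem : ∀ w ∈ WW, x₀ - a < w ∧ w < x₀ + a := by
    intro w hw
    obtain ⟨y, hyG, hye⟩ := mem_image.1 (Finset.mem_of_mem_erase hw)
    subst hye
    refine ⟨?_, hint y (mem_filter.1 hyG).2⟩
    have := (he_mem y).1
    simp only [hc] at this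
    linarith
  have hVrsub : ∀ t ∈ insert (x₀ - a) (insert (x₀ + a) (insert x₀ WW)), t ∈ T'' := by
    intro t ht
    rcases mem_insert.1 ht with rfl | ht
    · rw [← hc]; exact hcT
    rcases mem_insert.1 ht with rfl | ht
    · exact hxaT
    rcases mem_insert.1 ht with rfl | ht
    · exact mem_insert_of_mem (mem_image.2 ⟨_, hx, hex⟩)
    · obtain ⟨y, hyG, hye⟩ := mem_image.1 (Finset.mem_of_mem_erase ht)
      exact mem_insert_of_mem (mem_image.2 ⟨y, (mem_filter.1 hyG).1, hye⟩)
  have hTVr : ∀ t ∈ T'', t < x₀ + a →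
      t ∈ insert (x₀ - a) (insert (x₀ + a) (insert x₀ WW)) := by
    intro t ht htl
    rcases mem_insert.1 ht with rfl | ht
    · rw [hc]; exact mem_insert_self _ _
    · obtain ⟨y, hyF, hye⟩ := mem_image.1 ht
      have hyG' : y ∈ G := mem_filter.2 ⟨hyF, (hint2 y (by rw [hye]; exact htl)).2⟩
      have htG : t ∈ G.image e := mem_image.2 ⟨y, hyG', hye⟩
      rw [← himg] at htG
      exact mem_insert_of_mem (mem_insert_of_mem htG)
  have htrans : ∀ u ∈ insert x₀ WW,
      preF (insert (x₀ - a) (insert (x₀ + a) (insert x₀ WW))) u = preF T'' u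
      ∧ nxtF (insert (x₀ - a) (insert (x₀ + a) (insert x₀ WW))) u = nxtF T'' u := by
    intro u hu
    have hub : x₀ - a < u ∧ u < x₀ + a := by
      rcases mem_insert.1 hu with rfl | hu
      · constructor <;> linarith
      · exact hWWmem u hu
    have hcu : c < u := by rw [hc]; exact hub.1
    obtain ⟨hpT, hpu, hpmax⟩ := preF_spec ⟨c, hcT, hcu⟩
    obtain ⟨hnT, hun, hnmin⟩ := nxtF_spec ⟨x₀ + a, hxaT, hub.2⟩
    constructor
    · exact preF_eq (hTVr _ hpT (by linarith)) hpu
        (fun t' ht' hlt => hpmax t' (hVrsub t' ht') hlt)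
    · have hnle : nxtF T'' u ≤ x₀ + a := hnmin _ hxaT hub.2
      have hnVr : nxtF T'' u ∈ insert (x₀ - a) (insert (x₀ + a) (insert x₀ WW)) := by
        rcases lt_or_eq_of_le hnle with h | h
        · exact hTVr _ hnT h
        · rw [h]; exact mem_insert_of_mem (mem_insert_self _ _)
      exact nxtF_eq hnVr hun (fun t' ht' hlt => hnmin t' (hVrsub t' ht') hlt)
  rw [Finset.sum_congr rfl (fun u hu => by rw [← (htrans u hu).1, ← (htrans u hu).2])]
  exact real_key a x₀ ha WW hWWmem
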